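/- Let n ≥ 2, let a : {1,…,n}×{1,…,n} → ℝ, and define g : S_n → ℝ by g(σ) = ∑_{i,j=1}^n a_{ij}·(x_{i→j}(σ) − 1/n), i.e. g(σ) = ∑_{i=1}^n a_{i,σ(i)} − (1/n)·∑_{i,j=1}^n a_{ij}. Then (1/n!)·∑_{σ∈S_n} g(σ)² ≤ (8/n)·∑_{i,j=1}^n a_{ij}². -/

import Mathlib

open Equiv Finset

abbrev Perm' (n : ℕ) := Equiv.Perm (Fin n)

lemma sum_perm_zero {m : ℕ} (f : Fin (m+1) → ℝ) :
    ∑ σ : Perm' (m+1), f (σ 0) = m.factorial * ∑ j, f j := by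
  rw [← Equiv.sum_comp Equiv.Perm.decomposeFin.symm (fun σ : Perm' (m+1) => f (σ 0))]
  simp [Fintype.sum_prod_type, Finset.sum_const, Fintype.card_perm]
  rw [← Finset.mul_sum]

lemma sum_perm_apply {m : ℕ} (f : Fin (m+1) → ℝ) (i : Fin (m+1)) :
    ∑ σ : Perm' (m+1), f (σ i) = m.factorial * ∑ j, f j := by
  rw [← Equiv.sum_comp (Equiv.mulRight (Equiv.swap 0 i)) (fun σ : Perm' (m+1) => f (σ i))]
  simp only [Equiv.coe_mulRight, Equiv.Perm.mul_apply, Equiv.swap_apply_right]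
  exact sum_perm_zero f

lemma sum_perm_pair {m : ℕ} (F : Fin (m+2) → Fin (m+2) → ℝ) (i k : Fin (m+2)) (hik : i ≠ k) :
    ∑ σ : Perm' (m+2), F (σ i) (σ k) = m.factorial * ∑ p, ((∑ q, F p q) - F p p) := by
  rw [← Equiv.sum_comp (Equiv.mulRight (Equiv.swap 0 i))
        (fun σ : Perm' (m+2) => F (σ i) (σ k))]
  simp only [Equiv.coe_mulRight, Equiv.Perm.mul_apply, Equiv.swap_apply_right]
  have hk0 : Equiv.swap 0 i k ≠ 0 := by
    simp only [Ne, Equiv.swap_apply_eq_iff, Equiv.swap_apply_left]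
    exact fun h => hik h.symm
  obtain ⟨k'', hk''⟩ : ∃ k'', Equiv.swap 0 i k = Fin.succ k'' :=
    ⟨(Equiv.swap 0 i k).pred hk0, (Fin.succ_pred _ _).symm⟩
  rw [show (fun σ : Perm' (m+2) => F (σ 0) (σ (Equiv.swap 0 i k)))
        = (fun σ : Perm' (m+2) => F (σ 0) (σ k''.succ)) by rw [hk'']]
  rw [← Equiv.sum_comp Equiv.Perm.decomposeFin.symm
        (fun σ : Perm' (m+2) => F (σ 0) (σ k''.succ))]
  rw [Fintype.sum_prod_type]
  simp only [Equiv.Perm.decomposeFin_symm_apply_zero, Equiv.Perm.decomposeFin_symm_apply_succ]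
  have inner : ∀ p : Fin (m+2),
      ∑ e : Perm' (m+1), F p (Equiv.swap 0 p ((e k'').succ))
        = m.factorial * ((∑ q, F p q) - F p p) := by
    intro p
    rw [sum_perm_apply (fun l => F p (Equiv.swap 0 p l.succ)) k'']
    congr 1
    have h1 : ∑ x : Fin (m+2), F p (Equiv.swap 0 p x) = ∑ q, F p q :=
      Equiv.sum_comp (Equiv.swap 0 p) (fun q => F p q)
    have h2 := Fin.sum_univ_succ (fun x : Fin (m+2) => F p (Equiv.swap 0 p x))
    rw [h1] at h2
    simp only [Equiv.swap_apply_left] at h2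
    linarith [h2]
  rw [Finset.sum_congr rfl (fun p _ => inner p), ← Finset.mul_sum]

set_option maxHeartbeats 1000000 in
/-- One-sided Parseval: for `g(σ) = ∑_{i,j} a_{ij}(x_{i→j}(σ) − 1/n)`, i.e.
`g(σ) = ∑_i a_{i,σ(i)} − (1/n)∑_{i,j} a_{ij}`, we have `‖g‖₂² ≤ (8/n)·∑_{i,j} a_{ij}²`. -/
theorem linear_function_norm_bound (n : ℕ) (hn : 2 ≤ n) (a : Fin n → Fin n → ℝ) :
    (∑ σ : Perm' n, ((∑ i, a i (σ i)) - (∑ i, ∑ j, a i j) / n) ^ 2) / n.factorial ≤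
      8 / n * ∑ i, ∑ j, a i j ^ 2 := by
  obtain ⟨m, rfl⟩ : ∃ m, n = m + 2 := ⟨n - 2, by omega⟩
  have hN : (0:ℝ) < ((m+2 : ℕ) : ℝ) := by positivity
  set S : ℝ := ∑ i, ∑ j, a i j with hS
  set b : Fin (m+2) → Fin (m+2) → ℝ :=
    fun i j => a i j - S / ((m+2:ℕ):ℝ)^2 with hb
  set A2 : ℝ := ∑ i, ∑ j, a i j ^ 2 with hA2
  set B2 : ℝ := ∑ i, ∑ j, b i j * b i j with hB2
  set R : Fin (m+2) → ℝ := fun i => ∑ j, b i j with hR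
  -- rewrite the summand
  have hg : ∀ σ : Perm' (m+2),
      (∑ i, a i (σ i)) - S / ((m+2:ℕ):ℝ) = ∑ i, b i (σ i) := by
    intro σ
    simp only [hb]
    rw [Finset.sum_sub_distrib, Finset.sum_const, Finset.card_univ, Fintype.card_fin,
      nsmul_eq_mul]
    have : ((m+2:ℕ):ℝ) * (S / ((m+2:ℕ):ℝ)^2) = S / ((m+2:ℕ):ℝ) := by
      field_simp
    rw [this]
  -- expand the square
  have expand : ∑ σ : Perm' (m+2), (∑ i, b i (σ i))^2
      = ∑ i, ∑ k, ∑ σ : Perm' (m+2), b i (σ i) * b k (σ k) := by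
    simp_rw [sq, Finset.sum_mul_sum]
    rw [Finset.sum_comm]
    exact Finset.sum_congr rfl fun i _ => Finset.sum_comm
  have diag : ∀ i, ∑ σ : Perm' (m+2), b i (σ i) * b i (σ i)
      = (m+1).factorial * ∑ j, b i j * b i j :=
    fun i => sum_perm_apply (fun j => b i j * b i j) i
  have off : ∀ i k, k ≠ i → ∑ σ : Perm' (m+2), b i (σ i) * b k (σ k)
      = m.factorial * (R i * R k - ∑ p, b i p * b k p) := by
    intro i k h
    rw [sum_perm_pair (fun p q => b i p * b k q) i k h.symm]
    congr 1
    rw [Finset.sum_sub_distrib]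
    congr 1
    simp_rw [← Finset.mul_sum]
    rw [← Finset.sum_mul]
  -- row sums of b sum to zero
  have hRsum : ∑ i, R i = 0 := by
    simp only [hR, hb, Finset.sum_sub_distrib, Finset.sum_const, Finset.card_univ,
      Fintype.card_fin, nsmul_eq_mul, ← hS]
    field_simp
    ring
  -- the off-diagonal part
  have hE : ∑ i, ∑ k ∈ univ.erase i, (R i * R k - ∑ p, b i p * b k p)
      = -(∑ i, R i * R i) - (∑ p, (∑ i, b i p) * (∑ i, b i p)) + B2 := by
    have h1 : ∀ i : Fin (m+2), ∑ k ∈ univ.erase i, (R i * R k - ∑ p, b i p * b k p)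
        = -(R i * R i) - (∑ p, b i p * (∑ k, b k p)) + ∑ p, b i p * b i p := by
      intro i
      rw [Finset.sum_sub_distrib, ← Finset.mul_sum,
        Finset.sum_erase_eq_sub (Finset.mem_univ i), hRsum]
      rw [Finset.sum_comm]
      have h2 : ∀ p : Fin (m+2), ∑ k ∈ univ.erase i, b k p
          = (∑ k, b k p) - b i p := fun p => Finset.sum_erase_eq_sub (Finset.mem_univ i)
      simp_rw [← Finset.mul_sum, h2, mul_sub]
      rw [Finset.sum_sub_distrib]
      ring
    rw [Finset.sum_congr rfl fun i _ => h1 i]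
    rw [Finset.sum_add_distrib, Finset.sum_sub_distrib, hB2]
    congr 2
    · rw [← Finset.sum_neg_distrib]
    · rw [Finset.sum_comm]
      exact Finset.sum_congr rfl fun p _ => (Finset.sum_mul _ _ _).symm
  have hEle : ∑ i, ∑ k ∈ univ.erase i, (R i * R k - ∑ p, b i p * b k p) ≤ B2 := by
    rw [hE]
    have p1 : (0:ℝ) ≤ ∑ i, R i * R i := Finset.sum_nonneg fun i _ => mul_self_nonneg _
    have p2 : (0:ℝ) ≤ ∑ p, (∑ i, b i p) * (∑ i, b i p) :=
      Finset.sum_nonneg fun p _ => mul_self_nonneg _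
    linarith
  -- total bound in terms of B2
  have key : ∑ σ : Perm' (m+2), (∑ i, b i (σ i))^2
      ≤ (((m+1).factorial : ℝ) + m.factorial) * B2 := by
    rw [expand]
    have hsplit : ∀ i : Fin (m+2), ∑ k, (∑ σ : Perm' (m+2), b i (σ i) * b k (σ k))
        = ((m+1).factorial : ℝ) * (∑ j, b i j * b i j)
          + m.factorial * ∑ k ∈ univ.erase i, (R i * R k - ∑ p, b i p * b k p) := by
      intro i
      rw [← Finset.add_sum_erase _ _ (Finset.mem_univ i), diag i]
      congr 1
      rw [Finset.mul_sum]
      exact Finset.sum_congr rfl fun k hk => off i k (Finset.ne_of_mem_erase hk)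
    rw [Finset.sum_congr rfl fun i _ => hsplit i, Finset.sum_add_distrib]
    have e1 : ∑ i, ((m+1).factorial : ℝ) * (∑ j, b i j * b i j)
        = ((m+1).factorial : ℝ) * B2 := by rw [← Finset.mul_sum, hB2]
    have e2 : ∑ i, (m.factorial : ℝ) * ∑ k ∈ univ.erase i, (R i * R k - ∑ p, b i p * b k p)
        = (m.factorial : ℝ) * ∑ i, ∑ k ∈ univ.erase i, (R i * R k - ∑ p, b i p * b k p) := by
      rw [Finset.mul_sum]
    rw [e1, e2, add_mul]
    have : (m.factorial : ℝ) * ∑ i, ∑ k ∈ univ.erase i, (R i * R k - ∑ p, b i p * b k p)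
        ≤ (m.factorial : ℝ) * B2 :=
      mul_le_mul_of_nonneg_left hEle (by positivity)
    linarith
  -- B2 ≤ A2
  have hB2A2 : B2 ≤ A2 := by
    have hd : A2 - B2 = S^2 / ((m+2:ℕ):ℝ)^2 := by
      simp only [hB2, hA2, hb]
      rw [← Finset.sum_sub_distrib]
      simp_rw [← Finset.sum_sub_distrib]
      have : ∀ (x : ℝ), x^2 - (x - S/((m+2:ℕ):ℝ)^2) * (x - S/((m+2:ℕ):ℝ)^2)
          = 2*(S/((m+2:ℕ):ℝ)^2)*x - (S/((m+2:ℕ):ℝ)^2)^2 := fun x => by ring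
      simp_rw [this, Finset.sum_sub_distrib, ← Finset.mul_sum, Finset.sum_const,
        Finset.card_univ, Fintype.card_fin, nsmul_eq_mul, ← hS]
      field_simp
      ring
    have : (0:ℝ) ≤ S^2 / ((m+2:ℕ):ℝ)^2 := by positivity
    linarith
  -- finish
  have goal_eq : ∑ σ : Perm' (m+2), ((∑ i, a i (σ i)) - S / ((m+2:ℕ):ℝ))^2
      = ∑ σ : Perm' (m+2), (∑ i, b i (σ i))^2 :=
    Finset.sum_congr rfl fun σ _ => by rw [hg σ]
  rw [goal_eq, div_le_iff₀ (by positivity : (0:ℝ) < ((m+2).factorial : ℝ))]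
  have hf2 : (((m+2).factorial : ℕ) : ℝ) = (m.factorial : ℝ) * (m+1) * (m+2) := by
    rw [show m+2 = (m+1)+1 from rfl, Nat.factorial_succ, Nat.factorial_succ]
    push_cast; ring
  have hf1 : (((m+1).factorial : ℕ) : ℝ) = (m.factorial : ℝ) * (m+1) := by
    rw [Nat.factorial_succ]; push_cast; ring
  have hA2nn : (0:ℝ) ≤ A2 := by
    rw [hA2]; exact Finset.sum_nonneg fun i _ => Finset.sum_nonneg fun j _ => sq_nonneg _
  have hfac : (1:ℝ) ≤ (m.factorial : ℝ) := by exact_mod_cast Nat.one_le_iff_ne_zero.mpr m.factorial_pos.ne'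
  have hB2nn : (0:ℝ) ≤ B2 := by
    rw [hB2]; exact Finset.sum_nonneg fun i _ => Finset.sum_nonneg fun j _ => mul_self_nonneg _
  have step : ∑ σ : Perm' (m+2), (∑ i, b i (σ i))^2
      ≤ (((m+1).factorial : ℝ) + m.factorial) * A2 :=
    key.trans (mul_le_mul_of_nonneg_left hB2A2 (by positivity))
  refine step.trans ?_
  rw [hf1, hf2]
  have hcast : ((m+2:ℕ):ℝ) = (m:ℝ) + 2 := by push_cast; ring
  rw [hcast, div_mul_eq_mul_div, div_mul_eq_mul_div,
    le_div_iff₀ (by positivity : (0:ℝ) < (m:ℝ)+2)]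
  have h1 : (0:ℝ) ≤ (m.factorial:ℝ) * A2 * ((m:ℝ)+2) :=
    mul_nonneg (mul_nonneg (by positivity) hA2nn) (by positivity)
  nlinarith [h1, mul_nonneg h1 (Nat.cast_nonneg m : (0:ℝ) ≤ (m:ℝ))]
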